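/- Let k ∈ L²(ℝ²) be a kernel such that the integral operator Int k maps L²([λ,∞)) into L²([λ,∞)) for every λ ≤ 0. Then k(x,y) = 0 for almost every (x,y) with x < 0 and y > x; equivalently, the essential support of k is contained in the set Q₁ = {(x,y) : x ≥ 0 or y ≤ x}. -/

import Mathlib

open MeasureTheory Complex Filter Topology

noncomputable section

/-- If an a.e. assertion integrable function on a rational interval has vanishing integral on all
rational subintervals (in fact on all rational `Ioc`), it vanishes a.e. on the interval. -/
lemma aux_interval_stmt9 {g : ℝ → ℂ} {a b : ℚ}
    (hg : IntegrableOn g (Set.Ioc (a : ℝ) (b : ℝ)))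
    (h : ∀ c d : ℚ, a ≤ c → ∫ y in Set.Ioc (c : ℝ) (d : ℝ), g y = 0) :
    ∀ᵐ y : ℝ, y ∈ Set.Ioc (a : ℝ) (b : ℝ) → g y = 0 := by
  set μ' := (volume : Measure ℝ).restrict (Set.Ioc (a : ℝ) (b : ℝ)) with hμ'
  have hg' : Integrable g μ' := hg
  have htot : ∫ y, g y ∂μ' = 0 := h a b le_rfl
  have key : ∀ ⦃t : Set ℝ⦄, MeasurableSet t → ∫ y in t, g y ∂μ' = 0 := by
    refine MeasurableSpace.induction_on_inter
      ((BorelSpace.measurable_eq (α := ℝ)).trans Real.borel_eq_generateFrom_Ioo_rat)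
      Real.isPiSystem_Ioo_rat ?_ ?_ ?_ ?_
    · simp
    · rintro t ht
      simp only [Set.mem_iUnion, Set.mem_singleton_iff] at ht
      obtain ⟨c, d, _, rfl⟩ := ht
      have h1 : Set.Ioo (c : ℝ) (d : ℝ) =ᵐ[μ'] Set.Ioc (c : ℝ) (d : ℝ) :=
        Ioo_ae_eq_Ioc.filter_mono (ae_mono Measure.restrict_le_self)
      rw [setIntegral_congr_set h1, hμ', Measure.restrict_restrict measurableSet_Ioc,
        Set.Ioc_inter_Ioc, ← Rat.cast_max, ← Rat.cast_min]
      exact h _ _ (le_max_right _ _)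
    · intro t ht h0
      have h2 := integral_add_compl ht hg'
      rw [h0, zero_add] at h2
      rw [h2, htot]
    · intro f hdisj hmeas h0
      rw [integral_iUnion hmeas hdisj hg'.integrableOn]
      simp [h0]
  have hzero : g =ᵐ[μ'] 0 :=
    hg'.ae_eq_zero_of_forall_setIntegral_eq_zero fun s hs _ => key hs
  have := (ae_restrict_iff' measurableSet_Ioc).mp hzero
  filter_upwards [this] with y hy hmem using hy hmem

/-- If the integral operator with kernel `k ∈ L²(ℝ²)` maps `L²([λ,∞))` into itself for every
`λ ≤ 0`, then `k(x,y) = 0` for almost every `(x,y)` with `x < 0` and `y > x`. -/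
theorem stmt9 (k : ℝ × ℝ → ℂ) (hk : MemLp k 2 (volume : Measure (ℝ × ℝ)))
    (hinv : ∀ lam : ℝ, lam ≤ 0 → ∀ f : ℝ → ℂ, MemLp f 2 (volume : Measure ℝ) →
      (∀ᵐ y : ℝ, y < lam → f y = 0) →
      ∀ᵐ x : ℝ, x < lam → (∫ y : ℝ, k (x, y) * f y) = 0) :
    ∀ᵐ p : ℝ × ℝ, p.1 < 0 → p.1 < p.2 → k p = 0 := by
  classical
  set k' : ℝ × ℝ → ℂ := hk.1.mk k with hk'def
  have hk'sm : StronglyMeasurable k' := hk.1.stronglyMeasurable_mk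
  have hkk' : k =ᵐ[volume] k' := hk.1.ae_eq_mk
  have hvol : (volume : Measure (ℝ × ℝ)) = (volume : Measure ℝ).prod volume :=
    Measure.volume_eq_prod ℝ ℝ
  have hsec : ∀ᵐ x : ℝ, (fun y => k (x, y)) =ᵐ[volume] fun y => k' (x, y) := by
    have h := hkk'
    rw [hvol] at h
    exact Measure.ae_ae_of_ae_prod h
  -- integrability of ‖k'‖² on the product, then sections
  have hnorm : Integrable (fun p : ℝ × ℝ => ‖k' p‖ ^ (2 : ℝ)) volume := by
    have h2 := (hk.ae_eq hkk').integrable_norm_rpow two_ne_zero ENNReal.ofNat_ne_top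
    simpa using h2
  have hsec2 : ∀ᵐ x : ℝ, Integrable (fun y => ‖k' (x, y)‖ ^ (2 : ℝ)) volume := by
    rw [hvol] at hnorm
    exact hnorm.prod_right_ae
  -- Step: for rationals q ≤ 0 ≤ ... the interval integrals vanish a.e. in x < q
  have step : ∀ q c d : ℚ, (q : ℝ) ≤ 0 → q ≤ c →
      ∀ᵐ x : ℝ, x < (q : ℝ) → ∫ y in Set.Ioc (c : ℝ) (d : ℝ), k' (x, y) = 0 := by
    intro q c d hq hqc
    have hf : MemLp ((Set.Ioc (c : ℝ) (d : ℝ)).indicator fun _ => (1 : ℂ)) 2 volume :=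
      memLp_indicator_const 2 measurableSet_Ioc 1 (Or.inr measure_Ioc_lt_top.ne)
    have hvan : ∀ᵐ y : ℝ, y < (q : ℝ) →
        (Set.Ioc (c : ℝ) (d : ℝ)).indicator (fun _ => (1 : ℂ)) y = 0 := by
      refine Eventually.of_forall fun y hy => ?_
      apply Set.indicator_of_notMem
      intro hmem
      have hc : (q : ℝ) ≤ (c : ℝ) := by exact_mod_cast hqc
      have := hmem.1
      linarith
    have hmain := hinv (q : ℝ) hq _ hf hvan
    filter_upwards [hmain, hsec] with x hx hxsec hxq
    have h1 := hx hxq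
    have h2 : (∫ y, k (x, y) * (Set.Ioc (c : ℝ) (d : ℝ)).indicator (fun _ => (1 : ℂ)) y)
        = ∫ y, (Set.Ioc (c : ℝ) (d : ℝ)).indicator (fun y => k' (x, y)) y := by
      refine integral_congr_ae ?_
      filter_upwards [hxsec] with y hy
      by_cases hmem : y ∈ Set.Ioc (c : ℝ) (d : ℝ) <;>
        simp [Set.indicator_of_mem, Set.indicator_of_notMem, hmem, hy]
    rw [h2, integral_indicator measurableSet_Ioc] at h1
    exact h1
  -- combine over all rational triples
  have main : ∀ᵐ x : ℝ, ∀ t : ℚ × ℚ × ℚ, (t.1 : ℝ) ≤ 0 → t.1 ≤ t.2.1 → x < (t.1 : ℝ) →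
      ∫ y in Set.Ioc (t.2.1 : ℝ) (t.2.2 : ℝ), k' (x, y) = 0 := by
    rw [ae_all_iff]
    rintro ⟨q, c, d⟩
    by_cases h1 : (q : ℝ) ≤ 0
    · by_cases h2 : q ≤ c
      · filter_upwards [step q c d h1 h2] with x hx _ _ using hx
      · filter_upwards with x _ h using absurd h h2
    · filter_upwards with x h using absurd h h1
  -- now the sectionwise conclusion
  have main2 : ∀ᵐ x : ℝ, ∀ᵐ y : ℝ, x < 0 → x < y → k' (x, y) = 0 := by
    filter_upwards [main, hsec2] with x hx hints
    have hsm : StronglyMeasurable fun y => k' (x, y) :=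
      hk'sm.comp_measurable measurable_prodMk_left
    have hint : ∀ a b : ℚ, IntegrableOn (fun y => k' (x, y)) (Set.Ioc (a : ℝ) (b : ℝ)) := by
      intro a b
      have hfin : volume (Set.Ioc (a : ℝ) (b : ℝ)) < ⊤ := measure_Ioc_lt_top
      refine Integrable.mono' (g := fun y => 1 + ‖k' (x, y)‖ ^ (2 : ℝ))
        (((integrableOn_const_iff (C := (1 : ℝ))).mpr (Or.inr hfin)).add hints.integrableOn)
        hsm.aestronglyMeasurable.restrict ?_
      refine Eventually.of_forall fun y => ?_
      show ‖k' (x, y)‖ ≤ 1 + ‖k' (x, y)‖ ^ (2 : ℝ)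
      rcases le_or_gt ‖k' (x, y)‖ 1 with h | h
      · have h0 : (0 : ℝ) ≤ ‖k' (x, y)‖ ^ (2 : ℝ) := Real.rpow_nonneg (norm_nonneg _) _
        calc ‖k' (x, y)‖ ≤ 1 := h
        _ ≤ 1 + ‖k' (x, y)‖ ^ (2 : ℝ) := by linarith
      · have h2 : ‖k' (x, y)‖ ≤ ‖k' (x, y)‖ ^ (2 : ℝ) := by
          calc ‖k' (x, y)‖ = ‖k' (x, y)‖ ^ (1 : ℝ) := (Real.rpow_one _).symm
          _ ≤ ‖k' (x, y)‖ ^ (2 : ℝ) :=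
            Real.rpow_le_rpow_of_exponent_le h.le (by norm_num)
        linarith
    have key : ∀ t : ℚ × ℚ, ∀ᵐ y : ℝ, (x < (t.1 : ℝ) ∧ (t.1 : ℝ) ≤ 0) →
        y ∈ Set.Ioc (t.1 : ℝ) (t.2 : ℝ) → k' (x, y) = 0 := by
      rintro ⟨q, b⟩
      by_cases hc : x < (q : ℝ) ∧ (q : ℝ) ≤ 0
      · have := aux_interval_stmt9 (hint q b)
          (fun c d hqc => hx (q, c, d) hc.2 hqc hc.1)
        filter_upwards [this] with y hy _ using hy
      · filter_upwards with y h using absurd h hc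
    have key2 := ae_all_iff.mpr key
    filter_upwards [key2] with y hy hx0 hxy
    have hxm : x < min y 0 := lt_min hxy hx0
    obtain ⟨q, hq1, hq2⟩ := exists_rat_btwn hxm
    obtain ⟨b, hb⟩ := exists_rat_gt y
    exact hy (q, b) ⟨hq1, (lt_of_lt_of_le hq2 (min_le_right _ _)).le⟩
      ⟨lt_of_lt_of_le hq2 (min_le_left _ _), hb.le⟩
  -- transfer back to the product measure and to `k`
  have main3 : ∀ᵐ p : ℝ × ℝ, p.1 < 0 → p.1 < p.2 → k' p = 0 := by
    rw [hvol]
    have hmeas : MeasurableSet {p : ℝ × ℝ | p.1 < 0 → p.1 < p.2 → k' p = 0} := by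
      have h1 : MeasurableSet {p : ℝ × ℝ | p.1 < 0} :=
        measurable_fst measurableSet_Iio
      have h2 : MeasurableSet {p : ℝ × ℝ | p.1 < p.2} :=
        measurableSet_lt measurable_fst measurable_snd
      have h3 : MeasurableSet {p : ℝ × ℝ | k' p = 0} :=
        hk'sm.measurable (measurableSet_singleton 0)
      have : {p : ℝ × ℝ | p.1 < 0 → p.1 < p.2 → k' p = 0}
          = ({p : ℝ × ℝ | p.1 < 0} ∩ {p : ℝ × ℝ | p.1 < p.2})ᶜ ∪ {p : ℝ × ℝ | k' p = 0} := by
        ext p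
        simp only [Set.mem_setOf_eq, Set.mem_union, Set.mem_compl_iff, Set.mem_inter_iff,
          not_and_or, not_lt]
        constructor
        · intro h
          by_cases ha : p.1 < 0
          · by_cases hbb : p.1 < p.2
            · exact Or.inr (h ha hbb)
            · exact Or.inl (Or.inr (not_lt.mp hbb))
          · exact Or.inl (Or.inl (not_lt.mp ha))
        · rintro (h | h) h1 h2
          · rcases h with h | h
            · exact absurd h1 (not_lt.mpr h)
            · exact absurd h2 (not_lt.mpr h)
          · exact h
      rw [this]
      exact ((h1.inter h2).compl).union h3
    exact (Measure.ae_prod_iff_ae_ae hmeas).mpr main2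
  filter_upwards [main3, hkk'] with p h1 h2 ha hb
  rw [h2]
  exact h1 ha hb
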